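/- arXiv:2003.13560 — 4 statements merged into one kernel-verified Lean document; each statement's English description precedes it below -/
import Mathlib

section
/- Fix α > 0, e₁ > 0, and real e₂, e₃ ≥ 0. For a price vector p ∈ ℝⁿ define x_i(p) = (ω_i - p_i - p_b)/α and f(p) = e₁·Σᵢ(p_i + p_b)·x_i(p) - e₂·(Σᵢ x_i(p))² - e₃·Σᵢ((p_i + p_b)/α)². If ω_i > ω_j and p is a vector with p_i < p_j, then the vector q obtained from p by swapping coordinates i and j satisfies f(q) > f(p). In particular, f(q) - f(p) = (e₁/α)·(ω_i - ω_j)·(p_j - p_i). -/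
theorem swap_increases_objective
    (n : ℕ) (i j : Fin n) (hij : i ≠ j)
    (α e₁ e₂ e₃ p_b : ℝ) (hα : 0 < α) (he₁ : 0 < e₁) (he₂ : 0 ≤ e₂) (he₃ : 0 ≤ e₃)
    (ω p : Fin n → ℝ) (hω : ω i > ω j) (hp : p i < p j)
    (x : (Fin n → ℝ) → Fin n → ℝ)
    (hx : ∀ q k, x q k = (ω k - q k - p_b) / α)
    (f : (Fin n → ℝ) → ℝ)
    (hf : ∀ q, f q = e₁ * (∑ k, (q k + p_b) * x q k)
        - e₂ * (∑ k, x q k) ^ 2 - e₃ * (∑ k, ((q k + p_b) / α) ^ 2))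
    (q : Fin n → ℝ) (hq : q = p ∘ Equiv.swap i j) :
    f q - f p = (e₁ / α) * (ω i - ω j) * (p j - p i) ∧ f q > f p := by
  subst hq
  set σ := Equiv.swap i j with hσ
  -- sums invariant under permutation
  have hSp : ∑ k, (p ∘ σ) k = ∑ k, p k := Equiv.sum_comp σ p
  have h3 : ∑ k, (((p ∘ σ) k + p_b) / α) ^ 2 = ∑ k, ((p k + p_b) / α) ^ 2 :=
    Equiv.sum_comp σ (fun k => ((p k + p_b) / α) ^ 2)
  have h2 : ∑ k, x (p ∘ σ) k = ∑ k, x p k := by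
    simp only [hx, Function.comp_apply, sub_div]
    simp only [Finset.sum_sub_distrib]
    rw [show ∑ k, p (σ k) / α = ∑ k, p k / α by
      rw [← Finset.sum_div, ← Finset.sum_div, Equiv.sum_comp σ p]]
  -- the first sum, reindexed
  have h1 : ∑ k, ((p ∘ σ) k + p_b) * x (p ∘ σ) k
      = ∑ k, (p k + p_b) * ((ω (σ k) - p k - p_b) / α) := by
    rw [← Equiv.sum_comp σ (fun k => ((p ∘ σ) k + p_b) * x (p ∘ σ) k)]
    refine Finset.sum_congr rfl fun k _ => ?_
    simp [hx, Equiv.swap_apply_self, hσ]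
  have key : ∑ k, (p k + p_b) * ((ω (σ k) - p k - p_b) / α)
      - ∑ k, (p k + p_b) * ((ω k - p k - p_b) / α)
      = (p i + p_b) * ((ω j - ω i) / α) + (p j + p_b) * ((ω i - ω j) / α) := by
    rw [← Finset.sum_sub_distrib]
    have hsub : (({i, j} : Finset (Fin n)) ⊆ Finset.univ) := Finset.subset_univ _
    rw [← Finset.sum_subset hsub (by
      intro k _ hk
      simp only [Finset.mem_insert, Finset.mem_singleton, not_or] at hk
      rw [hσ, Equiv.swap_apply_of_ne_of_ne hk.1 hk.2]
      ring)]
    rw [Finset.sum_pair hij, hσ, Equiv.swap_apply_left, Equiv.swap_apply_right]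
    ring
  have hx' : ∀ k, x p k = (ω k - p k - p_b) / α := fun k => hx p k
  have hdiff : f (p ∘ σ) - f p = (e₁ / α) * (ω i - ω j) * (p j - p i) := by
    rw [hf, hf, h1, h2, h3]
    have : ∑ k, (p k + p_b) * x p k = ∑ k, (p k + p_b) * ((ω k - p k - p_b) / α) := by
      exact Finset.sum_congr rfl fun k _ => by rw [hx']
    rw [this]
    have expand : e₁ * (∑ k, (p k + p_b) * ((ω (σ k) - p k - p_b) / α))
        - e₂ * (∑ k, x p k) ^ 2 - e₃ * (∑ k, ((p k + p_b) / α) ^ 2)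
        - (e₁ * (∑ k, (p k + p_b) * ((ω k - p k - p_b) / α))
        - e₂ * (∑ k, x p k) ^ 2 - e₃ * (∑ k, ((p k + p_b) / α) ^ 2))
        = e₁ * ((∑ k, (p k + p_b) * ((ω (σ k) - p k - p_b) / α))
          - ∑ k, (p k + p_b) * ((ω k - p k - p_b) / α)) := by ring
    rw [expand, key]
    field_simp
    ring
  refine ⟨hdiff, ?_⟩
  have hpos : 0 < (e₁ / α) * (ω i - ω j) * (p j - p i) := by
    apply mul_pos (mul_pos (div_pos he₁ hα) (by linarith)) (by linarith)
  linarith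
end

section
/- Fix α > 0, e₁ > 0, e₂, e₃ ≥ 0 and a constant p_b. Let F(p) = e₁·Σᵢ(p_i + p_b)·(ω_i - p_i - p_b)/α - e₂·(Σᵢ (ω_i - p_i - p_b)/α)² - e₃·Σᵢ((p_i+p_b)/α)² + Σᵢ min(0, (ω_i - p_b - p_i)/α). If ω_i > ω_j and p_i < p_j, then swapping coordinates i and j of p strictly increases F. -/
private lemma sum_pair_diff {n : ℕ} (i j : Fin n) (hij : i ≠ j) (u v : Fin n → ℝ)
    (h : ∀ k, k ≠ i → k ≠ j → u k = v k) :
    ∑ k, u k - ∑ k, v k = u i + u j - (v i + v j) := by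
  have hmem : j ∈ Finset.univ.erase i :=
    Finset.mem_erase.mpr ⟨hij.symm, Finset.mem_univ j⟩
  rw [← Finset.add_sum_erase _ u (Finset.mem_univ i), ← Finset.add_sum_erase _ u hmem,
      ← Finset.add_sum_erase _ v (Finset.mem_univ i), ← Finset.add_sum_erase _ v hmem]
  have htail : ∑ k ∈ (Finset.univ.erase i).erase j, u k
      = ∑ k ∈ (Finset.univ.erase i).erase j, v k := by
    refine Finset.sum_congr rfl fun k hk => ?_
    simp only [Finset.mem_erase] at hk
    exact h k hk.2.1 hk.1
  rw [htail]; ring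

private lemma min_pair_lemma (a b c d : ℝ) (h1 : d ≤ a) (h2 : d ≤ b) (h3 : a + b = c + d) :
    min 0 c + min 0 d ≤ min 0 a + min 0 b := by
  simp only [min_def]
  split_ifs <;> linarith

theorem swap_increases_objective_formulation2
    (n : ℕ) (i j : Fin n) (hij : i ≠ j)
    (α e₁ e₂ e₃ p_b : ℝ) (hα : 0 < α) (he₁ : 0 < e₁) (he₂ : 0 ≤ e₂) (he₃ : 0 ≤ e₃)
    (ω p : Fin n → ℝ) (hω : ω i > ω j) (hp : p i < p j)
    (F : (Fin n → ℝ) → ℝ)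
    (hF : ∀ q, F q = e₁ * (∑ k, (q k + p_b) * ((ω k - q k - p_b) / α))
        - e₂ * (∑ k, (ω k - q k - p_b) / α) ^ 2
        - e₃ * (∑ k, ((q k + p_b) / α) ^ 2)
        + ∑ k, min 0 ((ω k - p_b - q k) / α)) :
    F (p ∘ Equiv.swap i j) > F p := by
  set q : Fin n → ℝ := p ∘ Equiv.swap i j with hq
  have hqi : q i = p j := by simp [hq]
  have hqj : q j = p i := by simp [hq]
  have hqk : ∀ k, k ≠ i → k ≠ j → q k = p k := fun k h1 h2 => by
    simp [hq, Equiv.swap_apply_of_ne_of_ne h1 h2]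
  rw [hF, hF]
  -- term 1 difference
  have d1 : ∑ k, (q k + p_b) * ((ω k - q k - p_b) / α)
      - ∑ k, (p k + p_b) * ((ω k - p k - p_b) / α)
      = ((p j + p_b) * ((ω i - p j - p_b) / α) + (p i + p_b) * ((ω j - p i - p_b) / α))
        - ((p i + p_b) * ((ω i - p i - p_b) / α) + (p j + p_b) * ((ω j - p j - p_b) / α)) := by
    rw [sum_pair_diff i j hij _ _ (fun k h1 h2 => by rw [hqk k h1 h2]), hqi, hqj]
  -- term 2 equality
  have d2 : ∑ k, (ω k - q k - p_b) / α = ∑ k, (ω k - p k - p_b) / α := by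
    have := sum_pair_diff i j hij (fun k => (ω k - q k - p_b) / α)
      (fun k => (ω k - p k - p_b) / α) (fun k h1 h2 => by rw [hqk k h1 h2])
    rw [hqi, hqj] at this
    have h0 : (ω i - p j - p_b) / α + (ω j - p i - p_b) / α
        - ((ω i - p i - p_b) / α + (ω j - p j - p_b) / α) = 0 := by ring
    linarith [this]
  -- term 3 equality
  have d3 : ∑ k, ((q k + p_b) / α) ^ 2 = ∑ k, ((p k + p_b) / α) ^ 2 := by
    have := sum_pair_diff i j hij (fun k => ((q k + p_b) / α) ^ 2)
      (fun k => ((p k + p_b) / α) ^ 2) (fun k h1 h2 => by rw [hqk k h1 h2])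
    rw [hqi, hqj] at this
    have h0 : ((p j + p_b) / α) ^ 2 + ((p i + p_b) / α) ^ 2
        - (((p i + p_b) / α) ^ 2 + ((p j + p_b) / α) ^ 2) = 0 := by ring
    linarith [this]
  -- term 4 difference
  have d4 : ∑ k, min 0 ((ω k - p_b - q k) / α)
      - ∑ k, min 0 ((ω k - p_b - p k) / α)
      = (min 0 ((ω i - p_b - p j) / α) + min 0 ((ω j - p_b - p i) / α))
        - (min 0 ((ω i - p_b - p i) / α) + min 0 ((ω j - p_b - p j) / α)) := by
    rw [sum_pair_diff i j hij _ _ (fun k h1 h2 => by rw [hqk k h1 h2]), hqi, hqj]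
  -- strict positivity of the linear part
  have key1 : ((p j + p_b) * ((ω i - p j - p_b) / α) + (p i + p_b) * ((ω j - p i - p_b) / α))
      - ((p i + p_b) * ((ω i - p i - p_b) / α) + (p j + p_b) * ((ω j - p j - p_b) / α))
      = ((p j - p i) * (ω i - ω j)) / α := by ring
  have hpos : 0 < ((p j - p i) * (ω i - ω j)) / α :=
    div_pos (mul_pos (by linarith) (by linarith)) hα
  -- min part nonneg
  have key2 : min 0 ((ω i - p_b - p i) / α) + min 0 ((ω j - p_b - p j) / α)
      ≤ min 0 ((ω i - p_b - p j) / α) + min 0 ((ω j - p_b - p i) / α) := by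
    apply min_pair_lemma
    · exact (div_le_div_iff_of_pos_right hα).mpr (by linarith)
    · exact (div_le_div_iff_of_pos_right hα).mpr (by linarith)
    · ring
  rw [d2, d3]
  have he1 : 0 < e₁ * (((p j - p i) * (ω i - ω j)) / α) := mul_pos he₁ hpos
  nlinarith [d1, d4, key1, key2, he1, mul_le_mul_of_nonneg_left key2 he₁.le]
end

section
/- Suppose p maximizes the Formulation-1 objective f(p) = e₁·Σᵢ(p_i + p_b)·(ω_i - p_i - p_b)/α - e₂·(Σᵢ(ω_i - p_i - p_b)/α)² - e₃·Σᵢ((p_i+p_b)/α)² over the feasible set {p : 0 ≤ p_i ≤ P, |p_i - p_j| ≤ η, p_i + p_b ≤ ω_i for all i, j} with e₁ > 0, α > 0, e₂, e₃ ≥ 0. Then ω_i ≥ ω_j implies p_i ≥ p_j. -/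
theorem fairness_of_optimal_prices
    (n : ℕ) (i j : Fin n)
    (α e₁ e₂ e₃ p_b P η : ℝ) (hα : 0 < α) (he₁ : 0 < e₁) (he₂ : 0 ≤ e₂) (he₃ : 0 ≤ e₃)
    (ω : Fin n → ℝ)
    (f : (Fin n → ℝ) → ℝ)
    (hf : ∀ q, f q = e₁ * (∑ k, (q k + p_b) * ((ω k - q k - p_b) / α))
        - e₂ * (∑ k, (ω k - q k - p_b) / α) ^ 2
        - e₃ * (∑ k, ((q k + p_b) / α) ^ 2))
    (feasible : (Fin n → ℝ) → Prop)
    (hfeas : ∀ q, feasible q ↔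
        (∀ k, 0 ≤ q k ∧ q k ≤ P) ∧ (∀ k l, |q k - q l| ≤ η) ∧
        (∀ k, q k + p_b ≤ ω k))
    (p : Fin n → ℝ) (hp : feasible p)
    (hopt : ∀ q, feasible q → f q ≤ f p)
    (hω : ω i ≥ ω j) :
    p i ≥ p j := by
  by_contra hlt
  push_neg at hlt
  have hij : i ≠ j := by rintro rfl; exact lt_irrefl _ hlt
  set c : ℝ := (p i + p j) / 2 with hc
  set m : Fin n → ℝ := fun k => if k = i ∨ k = j then c else p k with hm
  have hmi : m i = c := by simp [hm]
  have hmj : m j = c := by simp [hm]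
  have hmk : ∀ k, k ≠ i → k ≠ j → m k = p k := by
    intro k h1 h2; simp [hm, h1, h2]
  obtain ⟨hbnd, hpair, hcap⟩ := (hfeas p).mp hp
  have hη : 0 ≤ η := le_trans (abs_nonneg _) (hpair i j)
  -- feasibility of m
  have hmfeas : feasible m := by
    rw [hfeas]
    refine ⟨?_, ?_, ?_⟩
    · intro k
      by_cases h : k = i ∨ k = j
      · have hk : m k = c := by simp [hm, h]
        rw [hk]
        have h1 := (hbnd i).1; have h2 := (hbnd i).2
        have h3 := (hbnd j).1; have h4 := (hbnd j).2
        constructor <;> [skip; skip] <;> rw [hc] <;> linarith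
      · push_neg at h; rw [hmk k h.1 h.2]; exact hbnd k
    · intro k l
      have hval : ∀ k, m k = c ∨ m k = p k := by
        intro k
        by_cases h : k = i ∨ k = j
        · left; simp [hm, h]
        · right; push_neg at h; exact hmk k h.1 h.2
      have hcr : ∀ k, |c - p k| ≤ η := by
        intro k
        have h1 := abs_le.mp (hpair i k)
        have h2 := abs_le.mp (hpair j k)
        rw [abs_le, hc]
        constructor <;> linarith [h1.1, h1.2, h2.1, h2.2]
      rcases hval k with hk | hk <;> rcases hval l with hl | hl <;> rw [hk, hl]
      · simpa using hη
      · exact hcr l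
      · rw [abs_sub_comm]; exact hcr k
      · exact hpair k l
    · intro k
      by_cases h : k = i ∨ k = j
      · have hk : m k = c := by simp [hm, h]
        rw [hk]
        have h1 := hcap i; have h2 := hcap j
        rcases h with rfl | rfl
        · rw [hc]; linarith
        · rw [hc]; linarith
      · push_neg at h; rw [hmk k h.1 h.2]; exact hcap k
  have hpos : 0 < (p j - p i) ^ 2 / 2 + (ω i - ω j) * (p j - p i) / 2 := by
    nlinarith [sq_nonneg (p j - p i)]
  have hA : 0 < e₁ * (((p j - p i) ^ 2 / 2 + (ω i - ω j) * (p j - p i) / 2) / α) :=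
    mul_pos he₁ (div_pos hpos hα)
  have hB : e₃ * (-((p j - p i) ^ 2 / 2) / α ^ 2) ≤ 0 := by
    apply mul_nonpos_of_nonneg_of_nonpos he₃
    apply div_nonpos_of_nonpos_of_nonneg
    · nlinarith [sq_nonneg (p j - p i)]
    · positivity
  -- sum difference lemma
  have keylem : ∀ g : Fin n → ℝ → ℝ,
      (∑ k, g k (m k)) - (∑ k, g k (p k)) = (g i c - g i (p i)) + (g j c - g j (p j)) := by
    intro g
    rw [← Finset.sum_sub_distrib]
    rw [← Finset.sum_subset (Finset.subset_univ ({i, j} : Finset (Fin n)))]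
    · rw [Finset.sum_pair hij, hmi, hmj]
    · intro k _ hk
      simp only [Finset.mem_insert, Finset.mem_singleton, not_or] at hk
      rw [hmk k hk.1 hk.2, sub_self]
  have hle := hopt m hmfeas
  rw [hf m, hf p] at hle
  have e1 := keylem (fun k x => (x + p_b) * ((ω k - x - p_b) / α))
  have e2 := keylem (fun k x => (ω k - x - p_b) / α)
  have e3 := keylem (fun k x => ((x + p_b) / α) ^ 2)
  have hz : ((ω i - c - p_b) / α - (ω i - p i - p_b) / α)
      + ((ω j - c - p_b) / α - (ω j - p j - p_b) / α) = 0 := by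
    rw [hc]; field_simp; ring
  have h2 : (∑ k, (ω k - m k - p_b) / α) = ∑ k, (ω k - p k - p_b) / α := by
    have := e2; rw [hz] at this; linarith
  have h1 : (∑ k, (m k + p_b) * ((ω k - m k - p_b) / α))
      = (∑ k, (p k + p_b) * ((ω k - p k - p_b) / α))
        + (((c + p_b) * ((ω i - c - p_b) / α) - (p i + p_b) * ((ω i - p i - p_b) / α))
          + ((c + p_b) * ((ω j - c - p_b) / α) - (p j + p_b) * ((ω j - p j - p_b) / α))) := by
    linarith [e1]
  have h3 : (∑ k, ((m k + p_b) / α) ^ 2)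
      = (∑ k, ((p k + p_b) / α) ^ 2)
        + ((((c + p_b) / α) ^ 2 - ((p i + p_b) / α) ^ 2)
          + (((c + p_b) / α) ^ 2 - ((p j + p_b) / α) ^ 2)) := by
    linarith [e3]
  rw [h1, h2, h3] at hle
  -- reduce to the key inequality
  have hc1 : ((c + p_b) * ((ω i - c - p_b) / α) - (p i + p_b) * ((ω i - p i - p_b) / α))
      + ((c + p_b) * ((ω j - c - p_b) / α) - (p j + p_b) * ((ω j - p j - p_b) / α))
      = ((p j - p i) ^ 2 / 2 + (ω i - ω j) * (p j - p i) / 2) / α := by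
    rw [hc]; field_simp; ring
  have hc3 : (((c + p_b) / α) ^ 2 - ((p i + p_b) / α) ^ 2)
      + (((c + p_b) / α) ^ 2 - ((p j + p_b) / α) ^ 2)
      = -((p j - p i) ^ 2 / 2) / α ^ 2 := by
    rw [hc]; field_simp; ring
  rw [hc1, hc3] at hle
  clear e1 e2 e3 h1 h2 h3 hz hc1 hc3 hopt hf hfeas hmfeas hp keylem hpair hcap hbnd
  generalize (∑ k, (p k + p_b) * ((ω k - p k - p_b) / α)) = S1 at hle
  generalize (∑ k, (ω k - p k - p_b) / α) = S2 at hle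
  generalize (∑ k, ((p k + p_b) / α) ^ 2) = S3 at hle
  nlinarith [hA, hB]
end

section
/- Consider the unconstrained maximization over p ∈ ℝⁿ of L(p) = e₁·Σᵢ pᵢ(ωᵢ - pᵢ)/α - e₂β·(Σᵢ(ωᵢ - pᵢ)/α)² - e₃·Σᵢ(pᵢ/α)², with e₁, e₃ > 0, e₂β ≥ 0, α > 0. At any stationary point, pᵢ - p_j = (e₁·α·(ωᵢ - ω_j))/(2(α·e₁ + e₃)) for all i, j. Consequently, the maximal price spread equals η* = e₁·α·(ω_max - ω_min)/(2(α·e₁ + e₃)). -/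
theorem stationary_price_spread
    (n : ℕ) (α e₁ e₂ e₃ β : ℝ) (hα : 0 < α) (he₁ : 0 < e₁) (he₃ : 0 < e₃)
    (he₂β : 0 ≤ e₂ * β)
    (ω p : Fin n → ℝ)
    (hstat : ∀ i, e₁ * (ω i - 2 * p i) / α
        + (2 * e₂ * β / α) * (∑ k, (ω k - p k) / α)
        - 2 * e₃ * p i / α ^ 2 = 0)
    (imax imin : Fin n)
    (hmax : ∀ k, ω k ≤ ω imax) (hmin : ∀ k, ω imin ≤ ω k) :
    (∀ i j, p i - p j = e₁ * α * (ω i - ω j) / (2 * (α * e₁ + e₃))) ∧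
    (∀ k l, p k - p l ≤ e₁ * α * (ω imax - ω imin) / (2 * (α * e₁ + e₃))) ∧
    p imax - p imin = e₁ * α * (ω imax - ω imin) / (2 * (α * e₁ + e₃)) := by
  have hα0 : α ≠ 0 := ne_of_gt hα
  have hden : 0 < 2 * (α * e₁ + e₃) := by positivity
  have key : ∀ i j, p i - p j = e₁ * α * (ω i - ω j) / (2 * (α * e₁ + e₃)) := by
    intro i j
    have hi := hstat i
    have hj := hstat j
    have hdiff : e₁ * (ω i - 2 * p i) / α - 2 * e₃ * p i / α ^ 2
        - (e₁ * (ω j - 2 * p j) / α - 2 * e₃ * p j / α ^ 2) = 0 := by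
      linarith
    field_simp at hdiff
    field_simp
    nlinarith [hdiff]
  refine ⟨key, ?_, key imax imin⟩
  intro k l
  rw [key k l]
  apply div_le_div_of_nonneg_right ?_ hden.le |>.trans_eq rfl
  have : ω k - ω l ≤ ω imax - ω imin := by
    have := hmax k; have := hmin l; linarith
  nlinarith [mul_pos he₁ hα]
end
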